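/- Let n ∈ {4, 6, 8} and let G be a connected graph on n vertices. If the A_α-spectral radius with α = 1/2 satisfies ρ_{1/2}(G) > ρ_{1/2}(K_{(n−2)/2} ∨ \overline{K_{(n+2)/2}}), then G contains a perfect matching. -/

import Mathlib

open scoped Classical

/-- The largest eigenvalue of a real square matrix. -/
noncomputable def maxEigenvalue {V : Type*} [Fintype V] (M : Matrix V V ℝ) : ℝ :=
  sSup {t : ℝ | Module.End.HasEigenvalue (Matrix.toLin' M) t}

/-- The `A_α`-matrix `α•D(G) + (1-α)•A(G)` of a graph. -/
noncomputable def AalphaMatrix {V : Type*} [Fintype V] (α : ℝ) (G : SimpleGraph V) :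
    Matrix V V ℝ :=
  α • Matrix.diagonal (fun v => (G.degree v : ℝ)) + (1 - α) • G.adjMatrix ℝ

/-- The `A_α`-spectral radius of a graph: the largest eigenvalue of its `A_α`-matrix. -/
noncomputable def rhoAlpha {V : Type*} [Fintype V] (α : ℝ) (G : SimpleGraph V) : ℝ :=
  maxEigenvalue (AalphaMatrix α G)

/-- The graph `K_m ∨ (K_{n-m})ᶜ` on `Fin n`: the first `m` vertices form a clique
joined to everything and the remaining `n-m` vertices form an independent set. -/
def splitGraph (n m : ℕ) : SimpleGraph (Fin n) where
  Adj u v := u ≠ v ∧ ((u : ℕ) < m ∨ (v : ℕ) < m)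
  symm := by
    constructor
    rintro u v ⟨h1, h2⟩
    exact ⟨h1.symm, by tauto⟩
  loopless := by
    constructor
    rintro u ⟨h, -⟩
    exact h rfl

open Finset


section Comb
variable {V : Type*} [DecidableEq V]
set_option linter.unusedSectionVars false

/-- number of neighbours of `v` inside `S` -/
noncomputable def dS (G : SimpleGraph V) (S : Finset V) (v : V) : ℕ :=
  (S.filter (G.Adj v)).card

/-- twice the number of edges inside `S` -/
noncomputable def E2 (G : SimpleGraph V) (S : Finset V) : ℕ :=
  ∑ v ∈ S, dS G S v

/-- `S` has a perfect matching in `G` -/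
def HasM (G : SimpleGraph V) (S : Finset V) : Prop :=
  ∃ p : V → V, ∀ v ∈ S, p v ∈ S ∧ G.Adj v (p v) ∧ p (p v) = v

variable {G : SimpleGraph V}

lemma dS_eq_sum (S : Finset V) (v : V) :
    dS G S v = ∑ y ∈ S, if G.Adj v y then 1 else 0 := by
  rw [dS, Finset.card_filter]

lemma dS_lt {S : Finset V} {v : V} (hv : v ∈ S) : dS G S v < S.card := by
  apply Finset.card_lt_card
  rw [Finset.ssubset_iff_of_subset (Finset.filter_subset _ _)]
  exact ⟨v, hv, by simp [G.irrefl]⟩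

lemma dS_pos_iff {S : Finset V} {v : V} : 0 < dS G S v ↔ ∃ w ∈ S, G.Adj v w := by
  rw [dS, Finset.card_pos]
  constructor
  · rintro ⟨w, hw⟩
    exact ⟨w, (Finset.mem_filter.mp hw).1, (Finset.mem_filter.mp hw).2⟩
  · rintro ⟨w, hwS, hadj⟩
    exact ⟨w, Finset.mem_filter.mpr ⟨hwS, hadj⟩⟩

lemma dS_le_isolated {S : Finset V} {u x : V} (hu : u ∈ S) (h0 : dS G S u = 0)
    (hx : x ∈ S) (hxu : x ≠ u) : dS G S x ≤ S.card - 2 := by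
  have hsub : S.filter (G.Adj x) ⊆ (S.erase x).erase u := by
    intro y hy
    obtain ⟨hyS, hadj⟩ := Finset.mem_filter.mp hy
    have hyx : y ≠ x := fun h => G.irrefl (h ▸ hadj)
    have hyu : y ≠ u := by
      intro heq
      rw [heq] at hadj
      have hmem : x ∈ S.filter (G.Adj u) := Finset.mem_filter.mpr ⟨hx, hadj.symm⟩
      have hpos := Finset.card_pos.mpr ⟨x, hmem⟩
      simp only [dS] at h0
      omega
    exact Finset.mem_erase.mpr ⟨hyu, Finset.mem_erase.mpr ⟨hyx, hyS⟩⟩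
  have hu' : u ∈ S.erase x := Finset.mem_erase.mpr ⟨Ne.symm hxu, hu⟩
  have hle := Finset.card_le_card hsub
  rw [Finset.card_erase_of_mem hu', Finset.card_erase_of_mem hx] at hle
  show (S.filter (G.Adj x)).card ≤ S.card - 2
  omega

/-- removing the two endpoints of an edge -/
lemma E2_remove {S : Finset V} {u v : V} (hu : u ∈ S) (hv : v ∈ S) (huv : G.Adj u v) :
    E2 G (S \ {u, v}) + 2 * dS G S u + 2 * dS G S v = E2 G S + 2 := by
  have hne : u ≠ v := G.ne_of_adj huv
  set T := S \ {u, v} with hT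
  have hsub : ({u, v} : Finset V) ⊆ S := by
    intro x hx
    rcases Finset.mem_insert.mp hx with rfl | hx
    · exact hu
    · rw [Finset.mem_singleton.mp hx]; exact hv
  have hS : T ∪ {u, v} = S := Finset.sdiff_union_of_subset hsub
  have hdisj : Disjoint T ({u, v} : Finset V) := Finset.sdiff_disjoint
  -- dS over S decomposes
  have hdS : ∀ x, dS G S x
      = dS G T x + ((if G.Adj x u then 1 else 0) + if G.Adj x v then 1 else 0) := by
    intro x
    rw [dS_eq_sum, ← hS, Finset.sum_union hdisj, Finset.sum_pair hne, ← dS_eq_sum]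
  have hcol : ∀ w, ∑ x ∈ T, (if G.Adj x w then (1:ℕ) else 0) = dS G T w := by
    intro w
    rw [dS_eq_sum]
    exact Finset.sum_congr rfl fun x _ => by rw [G.adj_comm]
  have hE : E2 G S = ∑ x ∈ T, dS G S x + (dS G S u + dS G S v) := by
    rw [E2, ← hS, Finset.sum_union hdisj, Finset.sum_pair hne]
  have hsumT : ∑ x ∈ T, dS G S x = E2 G T + dS G T u + dS G T v := by
    calc ∑ x ∈ T, dS G S x
        = ∑ x ∈ T, (dS G T x + ((if G.Adj x u then 1 else 0) + if G.Adj x v then 1 else 0)) :=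
          Finset.sum_congr rfl fun x _ => hdS x
      _ = E2 G T + dS G T u + dS G T v := by
          rw [Finset.sum_add_distrib, Finset.sum_add_distrib, hcol, hcol, E2, add_assoc]
  have hdu : dS G S u = dS G T u + 1 := by
    rw [hdS u, if_neg G.irrefl, if_pos huv]
  have hdv : dS G S v = dS G T v + 1 := by
    rw [hdS v, if_pos huv.symm, if_neg G.irrefl]
  omega

lemma HasM.extend {S : Finset V} {u v : V} (hu : u ∈ S) (hv : v ∈ S) (huv : G.Adj u v)
    (h : HasM G (S \ {u, v})) : HasM G S := by
  obtain ⟨p, hp⟩ := h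
  have hne : u ≠ v := G.ne_of_adj huv
  refine ⟨fun x => if x = u then v else if x = v then u else p x, ?_⟩
  intro x hx
  rcases eq_or_ne x u with rfl | hxu
  · refine ⟨?_, ?_, ?_⟩ <;> simp [hne, hne.symm, hv, huv]
  rcases eq_or_ne x v with rfl | hxv
  · refine ⟨?_, ?_, ?_⟩ <;> simp [hne, hne.symm, hu, huv.symm, hxu]
  · have hxT : x ∈ S \ {u, v} := by
      simp only [Finset.mem_sdiff, Finset.mem_insert, Finset.mem_singleton]
      exact ⟨hx, by tauto⟩
    obtain ⟨hpx, hadj, hpp⟩ := hp x hxT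
    have hpxS : p x ∈ S := (Finset.mem_sdiff.mp hpx).1
    have hpxu : p x ≠ u := by
      have := (Finset.mem_sdiff.mp hpx).2
      simp only [Finset.mem_insert, Finset.mem_singleton] at this
      tauto
    have hpxv : p x ≠ v := by
      have := (Finset.mem_sdiff.mp hpx).2
      simp only [Finset.mem_insert, Finset.mem_singleton] at this
      tauto
    refine ⟨?_, ?_, ?_⟩ <;> simp [hxu, hxv, hpxu, hpxv, hpxS, hadj, hpp]

lemma sum4 {M : Type*} [AddCommMonoid M] {a b c d : V} (hab : a ≠ b) (hac : a ≠ c)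
    (had : a ≠ d) (hbc : b ≠ c) (hbd : b ≠ d) (hcd : c ≠ d) (g : V → M) :
    ∑ x ∈ ({a, b, c, d} : Finset V), g x = g a + (g b + (g c + g d)) := by
  rw [Finset.sum_insert (by simp [hab, hac, had]),
    Finset.sum_insert (by simp [hbc, hbd]),
    Finset.sum_insert (by simp [hcd]), Finset.sum_singleton]

lemma hasM4 {S : Finset V} {a b c d : V} (ha : a ∈ S) (hb : b ∈ S) (hc : c ∈ S)
    (hd : d ∈ S) (hmem : ∀ x ∈ S, x = a ∨ x = b ∨ x = c ∨ x = d)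
    (hca : c ≠ a) (hcb : c ≠ b) (hda : d ≠ a) (hdb : d ≠ b)
    (hab : G.Adj a b) (hcd : G.Adj c d) : HasM G S := by
  have hba : b ≠ a := (G.ne_of_adj hab).symm
  have hdc : d ≠ c := (G.ne_of_adj hcd).symm
  refine ⟨fun x => if x = a then b else if x = b then a else if x = c then d else c, ?_⟩
  intro v hv
  rcases hmem v hv with rfl | rfl | rfl | rfl
  · refine ⟨?_, ?_, ?_⟩ <;> simp [hba, hb, hab]
  · refine ⟨?_, ?_, ?_⟩ <;> simp [hba, ha, hab.symm]
  · refine ⟨?_, ?_, ?_⟩ <;> simp [hca, hcb, hda, hdb, hdc, hd, hcd]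
  · refine ⟨?_, ?_, ?_⟩ <;> simp [hca, hcb, hda, hdb, hdc, hc, hcd.symm]

lemma E2_four {a b c d : V} (hab : a ≠ b) (hac : a ≠ c) (had : a ≠ d)
    (hbc : b ≠ c) (hbd : b ≠ d) (hcd : c ≠ d) :
    E2 G {a, b, c, d} = 2 * ((if G.Adj a b then 1 else 0) + (if G.Adj a c then 1 else 0)
      + (if G.Adj a d then 1 else 0) + (if G.Adj b c then 1 else 0)
      + (if G.Adj b d then 1 else 0) + (if G.Adj c d then 1 else 0)) := by
  have rba : (if G.Adj b a then (1:ℕ) else 0) = if G.Adj a b then 1 else 0 := by rw [G.adj_comm]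
  have rca : (if G.Adj c a then (1:ℕ) else 0) = if G.Adj a c then 1 else 0 := by rw [G.adj_comm]
  have rcb : (if G.Adj c b then (1:ℕ) else 0) = if G.Adj b c then 1 else 0 := by rw [G.adj_comm]
  have rda : (if G.Adj d a then (1:ℕ) else 0) = if G.Adj a d then 1 else 0 := by rw [G.adj_comm]
  have rdb : (if G.Adj d b then (1:ℕ) else 0) = if G.Adj b d then 1 else 0 := by rw [G.adj_comm]
  have rdc : (if G.Adj d c then (1:ℕ) else 0) = if G.Adj c d then 1 else 0 := by rw [G.adj_comm]
  have za : (if G.Adj a a then (1:ℕ) else 0) = 0 := if_neg G.irrefl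
  have zb : (if G.Adj b b then (1:ℕ) else 0) = 0 := if_neg G.irrefl
  have zc : (if G.Adj c c then (1:ℕ) else 0) = 0 := if_neg G.irrefl
  have zd : (if G.Adj d d then (1:ℕ) else 0) = 0 := if_neg G.irrefl
  rw [E2, sum4 hab hac had hbc hbd hcd (g := dS G {a, b, c, d}),
    dS_eq_sum, dS_eq_sum, dS_eq_sum, dS_eq_sum,
    sum4 hab hac had hbc hbd hcd, sum4 hab hac had hbc hbd hcd,
    sum4 hab hac had hbc hbd hcd, sum4 hab hac had hbc hbd hcd,
    za, zb, zc, zd, rba, rca, rcb, rda, rdb, rdc]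
  ring

lemma A4 {S : Finset V} (hc : S.card = 4) (hE : 8 ≤ E2 G S) : HasM G S := by
  have hpos : 0 < S.card := by omega
  obtain ⟨a, ha⟩ := Finset.card_pos.mp hpos
  have h3 : (S.erase a).card = 3 := by rw [Finset.card_erase_of_mem ha, hc]
  obtain ⟨b, c, d, hbc, hbd, hcd, hbcd⟩ := Finset.card_eq_three.mp h3
  have hbe : b ∈ S.erase a := by rw [hbcd]; simp
  have hce : c ∈ S.erase a := by rw [hbcd]; simp
  have hde : d ∈ S.erase a := by rw [hbcd]; simp
  have hb : b ∈ S := Finset.mem_of_mem_erase hbe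
  have hcS : c ∈ S := Finset.mem_of_mem_erase hce
  have hdS : d ∈ S := Finset.mem_of_mem_erase hde
  have hab : a ≠ b := fun h => (Finset.mem_erase.mp hbe).1 h.symm
  have hac : a ≠ c := fun h => (Finset.mem_erase.mp hce).1 h.symm
  have had : a ≠ d := fun h => (Finset.mem_erase.mp hde).1 h.symm
  have hmem : ∀ x ∈ S, x = a ∨ x = b ∨ x = c ∨ x = d := by
    intro x hx
    by_cases hxa : x = a
    · exact Or.inl hxa
    · have : x ∈ S.erase a := Finset.mem_erase.mpr ⟨hxa, hx⟩
      rw [hbcd] at this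
      simp only [Finset.mem_insert, Finset.mem_singleton] at this
      tauto
  by_cases h1 : G.Adj a b ∧ G.Adj c d
  · exact hasM4 ha hb hcS hdS hmem hac.symm hbc.symm had.symm hbd.symm h1.1 h1.2
  by_cases h2 : G.Adj a c ∧ G.Adj b d
  · exact hasM4 ha hcS hb hdS
      (fun x hx => by rcases hmem x hx with h | h | h | h <;> tauto)
      hab.symm hbc had.symm hcd.symm h2.1 h2.2
  by_cases h3' : G.Adj a d ∧ G.Adj b c
  · exact hasM4 ha hdS hb hcS
      (fun x hx => by rcases hmem x hx with h | h | h | h <;> tauto)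
      hab.symm hbd hac.symm hcd h3'.1 h3'.2
  · exfalso
    have hSeq : S = {a, b, c, d} := by
      have := Finset.insert_erase ha
      rw [hbcd] at this
      exact this.symm
    rw [hSeq, E2_four hab hac had hbc hbd hcd] at hE
    split_ifs at hE <;>
      first
        | omega
        | exact h1 ⟨‹G.Adj a b›, ‹G.Adj c d›⟩
        | exact h2 ⟨‹G.Adj a c›, ‹G.Adj b d›⟩
        | exact h3' ⟨‹G.Adj a d›, ‹G.Adj b c›⟩

end Comb
section Comb2
variable {V : Type*} [DecidableEq V] {G : SimpleGraph V}
set_option linter.unusedSectionVars false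

lemma card_sdiff_pair {S : Finset V} {x y : V} (hx : x ∈ S) (hy : y ∈ S) (hne : x ≠ y) :
    (S \ {x, y}).card = S.card - 2 := by
  rw [Finset.card_sdiff_of_subset]
  · rw [Finset.card_pair hne]
  · intro z hz
    rcases Finset.mem_insert.mp hz with rfl | hz
    · exact hx
    · rw [Finset.mem_singleton.mp hz]; exact hy

lemma min_mul_le {S : Finset V} {u : V} (hu : u ∈ S)
    (hmin : ∀ x ∈ S, dS G S u ≤ dS G S x) : S.card * dS G S u ≤ E2 G S := by
  calc S.card * dS G S u = ∑ _x ∈ S, dS G S u := by rw [Finset.sum_const, smul_eq_mul]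
    _ ≤ ∑ x ∈ S, dS G S x := Finset.sum_le_sum hmin
    _ = E2 G S := rfl

lemma E2_le {S : Finset V} {k : ℕ} (hk : ∀ x ∈ S, dS G S x ≤ k) :
    E2 G S ≤ S.card * k := by
  calc E2 G S ≤ S.card • k := Finset.sum_le_card_nsmul _ _ _ hk
    _ = S.card * k := by rw [smul_eq_mul]

lemma sum_decomp {S : Finset V} {u : V} (hu : u ∈ S) :
    E2 G S = dS G S u + ((∑ x ∈ S.filter (G.Adj u), dS G S x)
      + ∑ x ∈ S \ insert u (S.filter (G.Adj u)), dS G S x) := by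
  have hsub : insert u (S.filter (G.Adj u)) ⊆ S := by
    intro x hx
    rcases Finset.mem_insert.mp hx with rfl | hx
    · exact hu
    · exact Finset.filter_subset _ _ hx
  have hnm : u ∉ S.filter (G.Adj u) := by simp [G.irrefl]
  rw [E2, ← Finset.sum_sdiff hsub, Finset.sum_insert hnm]
  ring

lemma card_rest {S : Finset V} {u : V} (hu : u ∈ S) :
    (S \ insert u (S.filter (G.Adj u))).card = S.card - (dS G S u + 1) := by
  have hsub : insert u (S.filter (G.Adj u)) ⊆ S := by
    intro x hx
    rcases Finset.mem_insert.mp hx with rfl | hx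
    · exact hu
    · exact Finset.filter_subset _ _ hx
  have hnm : u ∉ S.filter (G.Adj u) := by simp [G.irrefl]
  rw [Finset.card_sdiff_of_subset hsub, Finset.card_insert_of_notMem hnm]
  rw [dS, add_comm]

lemma dS_sdiff_le {S : Finset V} (P : Finset V) (z : V) :
    dS G S z ≤ dS G (S \ P) z + P.card := by
  have hsub : S.filter (G.Adj z) ⊆ (S \ P).filter (G.Adj z) ∪ P := by
    intro y hy
    obtain ⟨hyS, hadj⟩ := Finset.mem_filter.mp hy
    by_cases hyP : y ∈ P
    · exact Finset.mem_union_right _ hyP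
    · exact Finset.mem_union_left _
        (Finset.mem_filter.mpr ⟨Finset.mem_sdiff.mpr ⟨hyS, hyP⟩, hadj⟩)
  calc dS G S z ≤ ((S \ P).filter (G.Adj z) ∪ P).card := Finset.card_le_card hsub
    _ ≤ dS G (S \ P) z + P.card := Finset.card_union_le _ _

lemma all_eq_of_sum {T : Finset V} {f : V → ℕ} {k : ℕ} (hle : ∀ x ∈ T, k ≤ f x)
    (hsum : ∑ x ∈ T, f x = T.card * k) : ∀ x ∈ T, f x = k := by
  intro x hx
  by_contra hne
  have hgt : k + 1 ≤ f x := by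
    have := hle x hx
    omega
  have hdec : f x + ∑ y ∈ T.erase x, f y = ∑ y ∈ T, f y := Finset.add_sum_erase T f hx
  have hrest : (T.erase x).card • k ≤ ∑ y ∈ T.erase x, f y :=
    Finset.card_nsmul_le_sum _ _ _ (fun y hy => hle y (Finset.mem_of_mem_erase hy))
  rw [Finset.card_erase_of_mem hx, smul_eq_mul] at hrest
  rw [Nat.sub_mul, one_mul] at hrest
  generalize hA : T.card * k = A at hsum hrest
  omega

lemma filter_eq_erase {S : Finset V} {x : V} (hx : x ∈ S) (hd : dS G S x = S.card - 1) :
    S.filter (G.Adj x) = S.erase x := by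
  apply Finset.eq_of_subset_of_card_le
  · intro y hy
    obtain ⟨hyS, hadj⟩ := Finset.mem_filter.mp hy
    exact Finset.mem_erase.mpr ⟨fun h => G.irrefl (h ▸ hadj), hyS⟩
  · rw [Finset.card_erase_of_mem hx]
    show S.card - 1 ≤ dS G S x
    omega

lemma B6 {S : Finset V} (hc : S.card = 6) (hE : 22 ≤ E2 G S) : HasM G S := by
  have hne : S.Nonempty := Finset.card_pos.mp (by omega)
  obtain ⟨u, hu, hmin⟩ := S.exists_min_image (dS G S) hne
  have h6δ : 6 * dS G S u ≤ E2 G S := by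
    have := min_mul_le hu hmin
    rwa [hc] at this
  have hδ1 : 1 ≤ dS G S u := by
    by_contra h0
    push_neg at h0
    have h0' : dS G S u = 0 := by omega
    have hdec : E2 G S = dS G S u + ∑ x ∈ S.erase u, dS G S x :=
      (Finset.add_sum_erase S _ hu).symm
    have hrest : ∑ x ∈ S.erase u, dS G S x ≤ (S.erase u).card • 4 :=
      Finset.sum_le_card_nsmul _ _ _ (fun x hx => by
        have := dS_le_isolated hu h0' (Finset.mem_of_mem_erase hx) (Finset.mem_erase.mp hx).1
        omega)
    rw [Finset.card_erase_of_mem hu, hc, smul_eq_mul] at hrest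
    omega
  have hupos : 0 < dS G S u := by omega
  obtain ⟨w, hwS, hw⟩ := dS_pos_iff.mp hupos
  have hwlt : dS G S w < 6 := hc ▸ dS_lt hwS
  have hrem := E2_remove hu hwS hw
  have hcT : (S \ {u, w}).card = 4 := by
    rw [card_sdiff_pair hu hwS (G.ne_of_adj hw), hc]
  exact HasM.extend hu hwS hw (A4 hcT (by omega))

lemma B6' {S : Finset V} (hc : S.card = 6) (hδ : ∀ x ∈ S, 1 ≤ dS G S x)
    (hE : 20 ≤ E2 G S) : HasM G S := by
  rcases le_or_gt 22 (E2 G S) with h22 | h22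
  · exact B6 hc h22
  by_cases hedge : ∃ x ∈ S, ∃ y ∈ S, G.Adj x y ∧ dS G S x + dS G S y ≤ 7
  · obtain ⟨x, hx, y, hy, hxy, hsum⟩ := hedge
    have hrem := E2_remove hx hy hxy
    have hcT : (S \ {x, y}).card = 4 := by
      rw [card_sdiff_pair hx hy (G.ne_of_adj hxy), hc]
    exact HasM.extend hx hy hxy (A4 hcT (by omega))
  · exfalso
    push_neg at hedge
    obtain ⟨u, hu, hmin⟩ := S.exists_min_image (dS G S) (Finset.card_pos.mp (by omega))
    have hupos : 0 < dS G S u := by have := hδ u hu; omega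
    obtain ⟨w, hwS, hw⟩ := dS_pos_iff.mp hupos
    have hwlt : dS G S w < 6 := hc ▸ dS_lt hwS
    have h8 := hedge u hu w hwS hw
    have h6δ : 6 * dS G S u ≤ E2 G S := by
      have := min_mul_le hu hmin; rwa [hc] at this
    -- so dS u = 3 exactly
    have hδ3 : dS G S u = 3 := by omega
    have hdecomp := sum_decomp (G := G) hu
    have hNb : (S.filter (G.Adj u)).card = 3 := hδ3
    have hnb5 : ∀ x ∈ S.filter (G.Adj u), 5 ≤ dS G S x := by
      intro x hx
      have hadj := (Finset.mem_filter.mp hx).2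
      have := hedge u hu x (Finset.filter_subset _ _ hx) hadj
      omega
    have hsNb : 3 * 5 ≤ ∑ x ∈ S.filter (G.Adj u), dS G S x := by
      have := Finset.card_nsmul_le_sum (S.filter (G.Adj u)) (dS G S) 5 hnb5
      rwa [hNb, smul_eq_mul] at this
    have hcrest : (S \ insert u (S.filter (G.Adj u))).card = 2 := by
      rw [card_rest hu, hc, hδ3]
    have hsrest : 2 * 3 ≤ ∑ x ∈ S \ insert u (S.filter (G.Adj u)), dS G S x := by
      have : ∀ x ∈ S \ insert u (S.filter (G.Adj u)), 3 ≤ dS G S x := by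
        intro x hx
        have hxS : x ∈ S := (Finset.mem_sdiff.mp hx).1
        have := hmin x hxS
        omega
      have h := Finset.card_nsmul_le_sum _ (dS G S) 3 this
      rwa [hcrest, smul_eq_mul] at h
    omega

end Comb2
section Comb3
variable {V : Type*} [DecidableEq V] {G : SimpleGraph V}
set_option linter.unusedSectionVars false

lemma C8 {S : Finset V} (hc : S.card = 8) (hδ : ∀ x ∈ S, 1 ≤ dS G S x)
    (hE : 38 ≤ E2 G S) : HasM G S := by
  by_contra hno
  have hedge : ∀ x ∈ S, ∀ y ∈ S, G.Adj x y → E2 G (S \ {x, y}) ≤ 21 := by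
    intro x hx y hy hxy
    by_contra hgt
    push_neg at hgt
    have hcT : (S \ {x, y}).card = 6 := by
      rw [card_sdiff_pair hx hy (G.ne_of_adj hxy), hc]
    exact hno (HasM.extend hx hy hxy (B6 hcT hgt))
  obtain ⟨u, hu, hmin⟩ := S.exists_min_image (dS G S) (Finset.card_pos.mp (by omega))
  have hupos : 0 < dS G S u := hδ u hu
  obtain ⟨w, hwS, hw⟩ := dS_pos_iff.mp hupos
  have hwlt : dS G S w < 8 := hc ▸ dS_lt hwS
  have hult : dS G S u < 8 := hc ▸ dS_lt hu
  -- min degree ≥ 3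
  have hδ3 : 3 ≤ dS G S u := by
    have h1 := hedge u hu w hwS hw
    have h2 := E2_remove hu hwS hw
    omega
  -- strengthened edge bound
  have hedge2 : ∀ x ∈ S, ∀ y ∈ S, G.Adj x y → E2 G (S \ {x, y}) ≤ 19 := by
    intro x hx y hy hxy
    by_contra hgt
    push_neg at hgt
    have hcT : (S \ {x, y}).card = 6 := by
      rw [card_sdiff_pair hx hy (G.ne_of_adj hxy), hc]
    have hδT : ∀ z ∈ S \ {x, y}, 1 ≤ dS G (S \ {x, y}) z := by
      intro z hz
      have h1 := dS_sdiff_le (G := G) (S := S) ({x, y} : Finset V) z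
      have h2 : 3 ≤ dS G S z := le_trans hδ3 (hmin z (Finset.mem_sdiff.mp hz).1)
      have h3 : ({x, y} : Finset V).card ≤ 2 := Finset.card_insert_le _ _ |>.trans (by simp)
      omega
    exact hno (HasM.extend hx hy hxy (B6' hcT hδT hgt))
  -- pick a minimum-degree neighbour of u
  have hwNb : w ∈ S.filter (G.Adj u) := Finset.mem_filter.mpr ⟨hwS, hw⟩
  obtain ⟨x0, hx0Nb, hx0min⟩ := (S.filter (G.Adj u)).exists_min_image (dS G S) ⟨w, hwNb⟩
  have hx0S : x0 ∈ S := Finset.filter_subset _ _ hx0Nb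
  have hx0adj : G.Adj u x0 := (Finset.mem_filter.mp hx0Nb).2
  have hx0lt : dS G S x0 < 8 := hc ▸ dS_lt hx0S
  have hrem0 := E2_remove hu hx0S hx0adj
  have h19 := hedge2 u hu x0 hx0S hx0adj
  have hdecomp := sum_decomp (G := G) hu
  have h8δ : 8 * dS G S u ≤ E2 G S := by
    have := min_mul_le hu hmin; rwa [hc] at this
  have hNbsum : (S.filter (G.Adj u)).card • dS G S x0 ≤ ∑ x ∈ S.filter (G.Adj u), dS G S x :=
    Finset.card_nsmul_le_sum _ _ _ hx0min
  have hNbcard : (S.filter (G.Adj u)).card = dS G S u := rfl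
  rw [hNbcard, smul_eq_mul] at hNbsum
  have hrcard : (S \ insert u (S.filter (G.Adj u))).card = 8 - (dS G S u + 1) := by
    rw [card_rest hu, hc]
  have hrest : (8 - (dS G S u + 1)) * dS G S u
      ≤ ∑ x ∈ S \ insert u (S.filter (G.Adj u)), dS G S x := by
    have h := Finset.card_nsmul_le_sum (S \ insert u (S.filter (G.Adj u))) (dS G S)
      (dS G S u) (fun x hx => hmin x (Finset.mem_sdiff.mp hx).1)
    rwa [hrcard, smul_eq_mul] at h
  -- case on the minimum degree
  have hub : E2 G S ≤ 8 * 7 := by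
    have := E2_le (G := G) (S := S) (k := 7) (fun x hx => by have := dS_lt (G := G) hx; omega)
    omega
  set a := dS G S x0 with ha
  set δ := dS G S u with hδu
  interval_cases δ <;> omega

end Comb3
section Comb4
variable {V : Type*} [DecidableEq V] {G : SimpleGraph V}
set_option linter.unusedSectionVars false

/-- If a 6-set with min-degree 1 and exactly 9 internal edges has no matching, it is the
split graph `K_2 ∨ 4K_1`. -/
lemma B6'' {S : Finset V} (hc : S.card = 6) (hδ : ∀ x ∈ S, 1 ≤ dS G S x)
    (hE : E2 G S = 18) (hno : ¬ HasM G S) :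
    ∃ H ⊆ S, H.card = 2 ∧ (∀ x ∈ H, S.filter (G.Adj x) = S.erase x) ∧
      (∀ x ∈ S, x ∉ H → S.filter (G.Adj x) = H) := by
  have hedge : ∀ x ∈ S, ∀ y ∈ S, G.Adj x y → 7 ≤ dS G S x + dS G S y := by
    intro x hx y hy hxy
    by_contra hlt
    push_neg at hlt
    have hrem := E2_remove hx hy hxy
    have hcT : (S \ {x, y}).card = 4 := by
      rw [card_sdiff_pair hx hy (G.ne_of_adj hxy), hc]
    exact hno (HasM.extend hx hy hxy (A4 hcT (by omega)))
  obtain ⟨u, hu, hmin⟩ := S.exists_min_image (dS G S) (Finset.card_pos.mp (by omega))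
  have hupos : 0 < dS G S u := hδ u hu
  obtain ⟨w, hwS, hw⟩ := dS_pos_iff.mp hupos
  have hwlt : dS G S w < 6 := hc ▸ dS_lt hwS
  have h7 := hedge u hu w hwS hw
  have h6δ : 6 * dS G S u ≤ E2 G S := by
    have := min_mul_le hu hmin; rwa [hc] at this
  -- min degree is 2 or 3
  have hδ23 : dS G S u = 2 ∨ dS G S u = 3 := by omega
  have hdecomp := sum_decomp (G := G) hu
  have hrcard : (S \ insert u (S.filter (G.Adj u))).card = 6 - (dS G S u + 1) := by
    rw [card_rest hu, hc]
  have hrest : (6 - (dS G S u + 1)) * dS G S u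
      ≤ ∑ x ∈ S \ insert u (S.filter (G.Adj u)), dS G S x := by
    have h := Finset.card_nsmul_le_sum (S \ insert u (S.filter (G.Adj u))) (dS G S)
      (dS G S u) (fun x hx => hmin x (Finset.mem_sdiff.mp hx).1)
    rwa [hrcard, smul_eq_mul] at h
  have hnbge : ∀ x ∈ S.filter (G.Adj u), 7 - dS G S u ≤ dS G S x := by
    intro x hx
    have := hedge u hu x (Finset.filter_subset _ _ hx) (Finset.mem_filter.mp hx).2
    omega
  have hNbsum : (S.filter (G.Adj u)).card • (7 - dS G S u)
      ≤ ∑ x ∈ S.filter (G.Adj u), dS G S x :=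
    Finset.card_nsmul_le_sum _ _ _ hnbge
  have hNbcard : (S.filter (G.Adj u)).card = dS G S u := rfl
  rw [hNbcard, smul_eq_mul] at hNbsum
  -- rule out min degree 3
  have hδ2 : dS G S u = 2 := by
    by_contra hne
    have h3 : dS G S u = 3 := by omega
    rw [h3] at hNbsum hrest
    omega
  -- neighbours have degree 5
  have hnb5 : ∀ x ∈ S.filter (G.Adj u), dS G S x = 5 := by
    intro x hx
    have h1 := hnbge x hx
    have h2 : dS G S x < 6 := hc ▸ dS_lt (Finset.filter_subset _ _ hx)
    omega
  -- the sums are then forced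
  have hNbsum5 : ∑ x ∈ S.filter (G.Adj u), dS G S x = 10 := by
    rw [Finset.sum_congr rfl hnb5, Finset.sum_const, hNbcard, hδ2, smul_eq_mul]
  have hrest6 : ∑ x ∈ S \ insert u (S.filter (G.Adj u)), dS G S x = 6 := by omega
  have hrest2 : ∀ x ∈ S \ insert u (S.filter (G.Adj u)), dS G S x = 2 := by
    apply all_eq_of_sum (fun x hx => by have := hmin x (Finset.mem_sdiff.mp hx).1; omega)
    rw [hrest6, hrcard, hδ2]
  refine ⟨S.filter (G.Adj u), Finset.filter_subset _ _, by rw [hNbcard, hδ2], ?_, ?_⟩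
  · intro x hx
    apply filter_eq_erase (Finset.filter_subset _ _ hx)
    rw [hc, hnb5 x hx]
  · -- non-hub vertices have neighbourhood exactly H
    intro x hxS hxH
    have hd2 : dS G S x = 2 := by
      rcases eq_or_ne x u with rfl | hxu
      · exact hδ2
      · exact hrest2 x (Finset.mem_sdiff.mpr ⟨hxS, by
          simp only [Finset.mem_insert]
          push_neg
          exact ⟨hxu, hxH⟩⟩)
    have hsubs : S.filter (G.Adj u) ⊆ S.filter (G.Adj x) := by
      intro h hh
      have hhS : h ∈ S := Finset.filter_subset _ _ hh
      have hxh : x ≠ h := by rintro rfl; exact hxH hh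
      have hfull : S.filter (G.Adj h) = S.erase h := by
        apply filter_eq_erase hhS
        rw [hc, hnb5 h hh]
      have : x ∈ S.filter (G.Adj h) := by
        rw [hfull]
        exact Finset.mem_erase.mpr ⟨hxh, hxS⟩
      exact Finset.mem_filter.mpr ⟨hhS, (Finset.mem_filter.mp this).2.symm⟩
    apply (Finset.eq_of_subset_of_card_le hsubs ?_).symm
    show dS G S x ≤ _
    rw [hd2, hNbcard, hδ2]

end Comb4
section Comb5
variable {V : Type*} [DecidableEq V] {G : SimpleGraph V}
set_option linter.unusedSectionVars false

/-- If an 8-set with min-degree 1 and exactly 18 internal edges has no matching, it is the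
split graph `K_3 ∨ 5K_1`. -/
lemma C8' {S : Finset V} (hc : S.card = 8) (hδ : ∀ x ∈ S, 1 ≤ dS G S x)
    (hE : E2 G S = 36) (hno : ¬ HasM G S) :
    ∃ H ⊆ S, H.card = 3 ∧ (∀ x ∈ H, S.filter (G.Adj x) = S.erase x) ∧
      (∀ x ∈ S, x ∉ H → S.filter (G.Adj x) = H) := by
  have hext : ∀ x ∈ S, ∀ y ∈ S, G.Adj x y → 22 ≤ E2 G (S \ {x, y}) → False := by
    intro x hx y hy hxy hge
    have hcT : (S \ {x, y}).card = 6 := by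
      rw [card_sdiff_pair hx hy (G.ne_of_adj hxy), hc]
    exact hno (HasM.extend hx hy hxy (B6 hcT hge))
  have hedge : ∀ x ∈ S, ∀ y ∈ S, G.Adj x y → 9 ≤ dS G S x + dS G S y := by
    intro x hx y hy hxy
    by_contra hlt
    push_neg at hlt
    have hrem := E2_remove hx hy hxy
    exact hext x hx y hy hxy (by omega)
  obtain ⟨u, hu, hmin⟩ := S.exists_min_image (dS G S) (Finset.card_pos.mp (by omega))
  have hupos : 0 < dS G S u := hδ u hu
  obtain ⟨w, hwS, hw⟩ := dS_pos_iff.mp hupos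
  have hwlt : dS G S w < 8 := hc ▸ dS_lt hwS
  have hult : dS G S u < 8 := hc ▸ dS_lt hu
  have h8δ : 8 * dS G S u ≤ E2 G S := by
    have := min_mul_le hu hmin; rwa [hc] at this
  have h9 := hedge u hu w hwS hw
  have hδ24 : dS G S u = 2 ∨ dS G S u = 3 ∨ dS G S u = 4 := by omega
  -- a convenient consequence of B6' on edge removals
  have hB6' : ∀ x ∈ S, ∀ y ∈ S, G.Adj x y → (∀ z ∈ S \ {x, y}, 1 ≤ dS G (S \ {x, y}) z) →
      20 ≤ E2 G (S \ {x, y}) → False := by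
    intro x hx y hy hxy hminT hge
    have hcT : (S \ {x, y}).card = 6 := by
      rw [card_sdiff_pair hx hy (G.ne_of_adj hxy), hc]
    exact hno (HasM.extend hx hy hxy (B6' hcT hminT hge))
  -- rule out min degree 2
  have hδne2 : dS G S u ≠ 2 := by
    intro hδ2
    have hw7 : dS G S w = 7 := by omega
    have hrem := E2_remove hu hwS hw
    by_cases hminT : ∀ z ∈ S \ {u, w}, 1 ≤ dS G (S \ {u, w}) z
    · exact hB6' u hu w hwS hw hminT (by omega)
    · push_neg at hminT
      obtain ⟨z, hzT, hz0⟩ := hminT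
      have hz0' : dS G (S \ {u, w}) z = 0 := by omega
      have hzS : z ∈ S := (Finset.mem_sdiff.mp hzT).1
      have hzu : z ≠ u := by
        have := (Finset.mem_sdiff.mp hzT).2
        simp only [Finset.mem_insert, Finset.mem_singleton] at this
        tauto
      have hzw : z ≠ w := by
        have := (Finset.mem_sdiff.mp hzT).2
        simp only [Finset.mem_insert, Finset.mem_singleton] at this
        tauto
      have hzle : dS G S z ≤ 2 := by
        have := dS_sdiff_le (G := G) (S := S) ({u, w} : Finset V) z
        have h2 : ({u, w} : Finset V).card ≤ 2 :=
          Finset.card_insert_le _ _ |>.trans (by simp)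
        omega
      -- neighbours of z lie in {u, w}
      have hnbz : S.filter (G.Adj z) ⊆ ({u, w} : Finset V) := by
        intro y hy
        obtain ⟨hyS, hadj⟩ := Finset.mem_filter.mp hy
        by_contra hyuw
        have hyT : y ∈ S \ {u, w} := Finset.mem_sdiff.mpr ⟨hyS, hyuw⟩
        have : y ∈ (S \ {u, w}).filter (G.Adj z) := Finset.mem_filter.mpr ⟨hyT, hadj⟩
        have hpos := Finset.card_pos.mpr ⟨y, this⟩
        show False
        have : dS G (S \ {u, w}) z = ((S \ {u, w}).filter (G.Adj z)).card := rfl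
        omega
      -- z is adjacent to w since w is adjacent to everything
      have hwfull : S.filter (G.Adj w) = S.erase w := filter_eq_erase hwS (by omega)
      have hzw' : G.Adj z w := by
        have : z ∈ S.filter (G.Adj w) := by
          rw [hwfull]; exact Finset.mem_erase.mpr ⟨hzw, hzS⟩
        exact (Finset.mem_filter.mp this).2.symm
      have hz12 : dS G S z = 1 ∨ dS G S z = 2 := by
        have := hδ z hzS; omega
      rcases hz12 with hz1 | hz2
      · -- remove the edge z w
        have hrem2 := E2_remove hzS hwS hzw'
        exact hext z hzS w hwS hzw' (by omega)
      · -- N(z) = {u, w}, so z is adjacent to u; remove the edge z u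
        have hnbeq : S.filter (G.Adj z) = ({u, w} : Finset V) := by
          apply Finset.eq_of_subset_of_card_le hnbz
          have : ({u, w} : Finset V).card ≤ 2 :=
            Finset.card_insert_le _ _ |>.trans (by simp)
          show _ ≤ dS G S z
          omega
        have hzu' : G.Adj z u := by
          have : u ∈ S.filter (G.Adj z) := by rw [hnbeq]; simp
          exact (Finset.mem_filter.mp this).2
        have hrem2 := E2_remove hzS hu hzu'.symm.symm
        exact hext z hzS u hu hzu' (by omega)
  -- in the remaining cases the removal of any edge keeps min-degree ≥ 1
  have hδ3' : 3 ≤ dS G S u := by omega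
  have hminT : ∀ x ∈ S, ∀ y ∈ S, ∀ z ∈ S \ {x, y}, 1 ≤ dS G (S \ {x, y}) z := by
    intro x hx y hy z hz
    have h1 := dS_sdiff_le (G := G) (S := S) ({x, y} : Finset V) z
    have h2 : 3 ≤ dS G S z := le_trans hδ3' (hmin z (Finset.mem_sdiff.mp hz).1)
    have h3 : ({x, y} : Finset V).card ≤ 2 := Finset.card_insert_le _ _ |>.trans (by simp)
    omega
  -- every neighbour of a vertex x has degree ≥ 10 - dS x... specialized: neighbours of u
  have hnb : ∀ x ∈ S.filter (G.Adj u), 10 - dS G S u ≤ dS G S x := by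
    intro x hx
    have hxS : x ∈ S := Finset.filter_subset _ _ hx
    have hadj : G.Adj u x := (Finset.mem_filter.mp hx).2
    have h9' := hedge u hu x hxS hadj
    have hxlt : dS G S x < 8 := hc ▸ dS_lt hxS
    by_contra hlt
    push_neg at hlt
    have hrem := E2_remove hu hxS hadj
    exact hB6' u hu x hxS hadj (hminT u hu x hxS) (by omega)
  -- sum decomposition
  have hdecomp := sum_decomp (G := G) hu
  have hrcard : (S \ insert u (S.filter (G.Adj u))).card = 8 - (dS G S u + 1) := by
    rw [card_rest hu, hc]
  have hrest : (8 - (dS G S u + 1)) * dS G S u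
      ≤ ∑ x ∈ S \ insert u (S.filter (G.Adj u)), dS G S x := by
    have h := Finset.card_nsmul_le_sum (S \ insert u (S.filter (G.Adj u))) (dS G S)
      (dS G S u) (fun x hx => hmin x (Finset.mem_sdiff.mp hx).1)
    rwa [hrcard, smul_eq_mul] at h
  have hNbcard : (S.filter (G.Adj u)).card = dS G S u := rfl
  have hNbsum : (S.filter (G.Adj u)).card • (10 - dS G S u)
      ≤ ∑ x ∈ S.filter (G.Adj u), dS G S x :=
    Finset.card_nsmul_le_sum _ _ _ hnb
  rw [hNbcard, smul_eq_mul] at hNbsum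
  -- rule out min degree 4
  have hδ3 : dS G S u = 3 := by
    rcases hδ24 with h | h | h
    · exact absurd h hδne2
    · exact h
    · rw [h] at hNbsum hrest
      omega
  -- all neighbours of u have degree 7
  have hnb7 : ∀ x ∈ S.filter (G.Adj u), dS G S x = 7 := by
    intro x hx
    have h1 := hnb x hx
    have h2 : dS G S x < 8 := hc ▸ dS_lt (Finset.filter_subset _ _ hx)
    omega
  have hNbsum7 : ∑ x ∈ S.filter (G.Adj u), dS G S x = 21 := by
    rw [Finset.sum_congr rfl hnb7, Finset.sum_const, hNbcard, hδ3, smul_eq_mul]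
  have hrest12 : ∑ x ∈ S \ insert u (S.filter (G.Adj u)), dS G S x = 12 := by omega
  have hrest3 : ∀ x ∈ S \ insert u (S.filter (G.Adj u)), dS G S x = 3 := by
    apply all_eq_of_sum (fun x hx => by have := hmin x (Finset.mem_sdiff.mp hx).1; omega)
    rw [hrest12, hrcard, hδ3]
  refine ⟨S.filter (G.Adj u), Finset.filter_subset _ _, by rw [hNbcard, hδ3], ?_, ?_⟩
  · intro x hx
    apply filter_eq_erase (Finset.filter_subset _ _ hx)
    rw [hc, hnb7 x hx]
  · intro x hxS hxH
    have hd3 : dS G S x = 3 := by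
      rcases eq_or_ne x u with rfl | hxu
      · exact hδ3
      · exact hrest3 x (Finset.mem_sdiff.mpr ⟨hxS, by
          simp only [Finset.mem_insert]
          push_neg
          exact ⟨hxu, hxH⟩⟩)
    have hsubs : S.filter (G.Adj u) ⊆ S.filter (G.Adj x) := by
      intro h hh
      have hhS : h ∈ S := Finset.filter_subset _ _ hh
      have hxh : x ≠ h := by rintro rfl; exact hxH hh
      have hfull : S.filter (G.Adj h) = S.erase h := by
        apply filter_eq_erase hhS
        rw [hc, hnb7 h hh]
      have : x ∈ S.filter (G.Adj h) := by
        rw [hfull]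
        exact Finset.mem_erase.mpr ⟨hxh, hxS⟩
      exact Finset.mem_filter.mpr ⟨hhS, (Finset.mem_filter.mp this).2.symm⟩
    apply (Finset.eq_of_subset_of_card_le hsubs ?_).symm
    show dS G S x ≤ _
    rw [hd3, hNbcard, hδ3]

end Comb5
section Spectral

lemma eig_le {n : ℕ} (hn : 0 < n) (M : Matrix (Fin n) (Fin n) ℝ)
    (hM : ∀ i j, 0 ≤ M i j) (x : Fin n → ℝ) (hx : ∀ i, 0 < x i) (B : ℝ)
    (hrow : ∀ i, M.mulVec x i ≤ B * x i) {μ : ℝ}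
    (hμ : Module.End.HasEigenvalue (Matrix.toLin' M) μ) : μ ≤ B := by
  obtain ⟨y, hy⟩ := hμ.exists_hasEigenvector
  have hmv : M.mulVec y = μ • y := by
    have := hy.apply_eq_smul
    rwa [Matrix.toLin'_apply] at this
  obtain ⟨i, -, himax⟩ := Finset.exists_max_image Finset.univ (fun j => |y j| / x j)
    ⟨⟨0, hn⟩, Finset.mem_univ _⟩
  set c := |y i| / x i with hc
  have hcpos : 0 < c := by
    obtain ⟨j, hj⟩ := Function.ne_iff.mp hy.2
    have hj' : y j ≠ 0 := by simpa using hj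
    have h1 : 0 < |y j| / x j := div_pos (abs_pos.mpr hj') (hx j)
    exact lt_of_lt_of_le h1 (himax j (Finset.mem_univ _))
  have hyi : |y i| = c * x i := by
    rw [hc, div_mul_cancel₀]
    exact (hx i).ne'
  have hbound : ∀ j, |y j| ≤ c * x j := by
    intro j
    have h1 : |y j| / x j ≤ c := himax j (Finset.mem_univ _)
    calc |y j| = |y j| / x j * x j := by
          rw [div_mul_cancel₀]; exact (hx j).ne'
      _ ≤ c * x j := mul_le_mul_of_nonneg_right h1 (hx j).le
  have key : |μ| * |y i| ≤ B * |y i| := by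
    calc |μ| * |y i| = |μ * y i| := (abs_mul μ (y i)).symm
      _ = |(M.mulVec y) i| := by rw [hmv]; simp
      _ = |∑ j, M i j * y j| := by rw [Matrix.mulVec, dotProduct]
      _ ≤ ∑ j, |M i j * y j| := Finset.abs_sum_le_sum_abs _ _
      _ = ∑ j, M i j * |y j| := by
          refine Finset.sum_congr rfl fun j _ => ?_
          rw [abs_mul, abs_of_nonneg (hM i j)]
      _ ≤ ∑ j, M i j * (c * x j) := by
          refine Finset.sum_le_sum fun j _ => ?_
          exact mul_le_mul_of_nonneg_left (hbound j) (hM i j)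
      _ = c * ∑ j, M i j * x j := by
          rw [Finset.mul_sum]
          exact Finset.sum_congr rfl fun j _ => by ring
      _ = c * (M.mulVec x i) := by rw [Matrix.mulVec, dotProduct]
      _ ≤ c * (B * x i) := mul_le_mul_of_nonneg_left (hrow i) hcpos.le
      _ = B * (c * x i) := by ring
      _ = B * |y i| := by rw [hyi]
  have hyipos : 0 < |y i| := by
    rw [hyi]; exact mul_pos hcpos (hx i)
  have habs : |μ| ≤ B := le_of_mul_le_mul_right key hyipos
  exact le_trans (le_abs_self μ) habs

lemma maxEig_le {n : ℕ} (hn : 0 < n) (M : Matrix (Fin n) (Fin n) ℝ)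
    (hM : ∀ i j, 0 ≤ M i j) (x : Fin n → ℝ) (hx : ∀ i, 0 < x i) (B : ℝ)
    (hrow : ∀ i, M.mulVec x i ≤ B * x i) (hB : 0 ≤ B) : maxEigenvalue M ≤ B := by
  apply Real.sSup_le _ hB
  intro t ht
  exact eig_le hn M hM x hx B hrow ht

lemma bddAbove_eig {n : ℕ} (hn : 0 < n) (M : Matrix (Fin n) (Fin n) ℝ)
    (hM : ∀ i j, 0 ≤ M i j) (x : Fin n → ℝ) (hx : ∀ i, 0 < x i) (B : ℝ)
    (hrow : ∀ i, M.mulVec x i ≤ B * x i) :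
    BddAbove {t : ℝ | Module.End.HasEigenvalue (Matrix.toLin' M) t} :=
  ⟨B, fun _t ht => eig_le hn M hM x hx B hrow ht⟩

lemma le_maxEig {n : ℕ} (M : Matrix (Fin n) (Fin n) ℝ)
    (hbdd : BddAbove {t : ℝ | Module.End.HasEigenvalue (Matrix.toLin' M) t})
    {t : ℝ} (ht : Module.End.HasEigenvalue (Matrix.toLin' M) t) :
    t ≤ maxEigenvalue M :=
  le_csSup hbdd ht

lemma aalpha_nonneg {n : ℕ} (G : SimpleGraph (Fin n)) (i j : Fin n) :
    0 ≤ AalphaMatrix (1/2) G i j := by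
  unfold AalphaMatrix
  simp only [Matrix.add_apply, Matrix.smul_apply, Matrix.diagonal_apply,
    SimpleGraph.adjMatrix_apply, smul_eq_mul]
  split_ifs <;> positivity

lemma aalpha_mulVec {n : ℕ} (G : SimpleGraph (Fin n)) (x : Fin n → ℝ) (i : Fin n) :
    (AalphaMatrix (1/2) G).mulVec x i
      = (1/2) * ((G.degree i : ℝ) * x i) + (1/2) * ∑ j ∈ G.neighborFinset i, x j := by
  have hinst : (fun (a b : Fin n) => Classical.propDecidable (a = b)) = instDecidableEqFin n :=
    Subsingleton.elim _ _
  unfold AalphaMatrix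
  rw [Matrix.add_mulVec]
  simp only [Pi.add_apply]
  rw [Matrix.smul_mulVec, Matrix.smul_mulVec]
  simp only [Pi.smul_apply, smul_eq_mul]
  rw [hinst, Matrix.mulVec_diagonal, SimpleGraph.adjMatrix_mulVec_apply]
  norm_num

lemma rho_le_deg {n : ℕ} (hn : 2 ≤ n) (G : SimpleGraph (Fin n))
    (hdeg : ∀ v, 0 < G.degree v) :
    rhoAlpha (1/2) G ≤ (G.edgeFinset.card : ℝ) / ((n : ℝ) - 1) + ((n : ℝ) - 2) / 2 := by
  have hnR : (2:ℝ) ≤ (n:ℝ) := by exact_mod_cast hn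
  have hn1 : (0:ℝ) < (n:ℝ) - 1 := by linarith
  set m := G.edgeFinset.card with hm
  set B := (m : ℝ) / ((n:ℝ) - 1) + ((n:ℝ) - 2)/2 with hB
  have hsum : ∑ v, (G.degree v : ℝ) = 2 * (m:ℝ) := by
    rw [← Nat.cast_sum]
    · rw [G.sum_degrees_eq_twice_card_edges]
      push_cast
      ring
  have hdlt : ∀ v : Fin n, (G.degree v : ℝ) ≤ (n:ℝ) - 1 := by
    intro v
    have h1 : G.degree v < Fintype.card (Fin n) := G.degree_lt_card_verts v
    rw [Fintype.card_fin] at h1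
    have h2 : G.degree v + 1 ≤ n := h1
    have h3 : (G.degree v : ℝ) + 1 ≤ (n:ℝ) := by exact_mod_cast h2
    linarith
  have hBpos : 0 ≤ B := by
    rw [hB]
    apply add_nonneg
    · exact div_nonneg (Nat.cast_nonneg m) hn1.le
    · linarith
  have hxpos : ∀ v : Fin n, (0:ℝ) < (G.degree v : ℝ) := fun v => by exact_mod_cast hdeg v
  apply maxEig_le (by omega) _ (aalpha_nonneg G) (fun v => (G.degree v : ℝ)) hxpos B _ hBpos
  intro i
  show (AalphaMatrix (1/2) G).mulVec (fun v => ((G.degree v : ℝ))) i ≤ B * ((G.degree i : ℝ))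
  rw [aalpha_mulVec]
  beta_reduce
  set d := (G.degree i : ℝ) with hd
  have hd1 : (1:ℝ) ≤ d := by
    rw [hd]
    have := hdeg i
    exact_mod_cast this
  have hnb1 : ∑ j ∈ G.neighborFinset i, (G.degree j : ℝ) ≤ d * ((n:ℝ) - 1) := by
    have h := Finset.sum_le_card_nsmul (G.neighborFinset i) (fun j => (G.degree j : ℝ))
      ((n:ℝ) - 1) (fun j _ => hdlt j)
    rw [SimpleGraph.card_neighborFinset_eq_degree, nsmul_eq_mul] at h
    rw [hd]
    exact h
  have hnb2 : ∑ j ∈ G.neighborFinset i, (G.degree j : ℝ) ≤ 2*(m:ℝ) - ((n:ℝ) - 1) := by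
    have hnm : i ∉ G.neighborFinset i := by simp
    have hsub : insert i (G.neighborFinset i) ⊆ Finset.univ := Finset.subset_univ _
    have hdec := Finset.sum_sdiff (f := fun v => (G.degree v : ℝ)) hsub
    rw [Finset.sum_insert hnm] at hdec
    have hccard : ((Finset.univ \ insert i (G.neighborFinset i)).card : ℝ)
        = (n:ℝ) - 1 - d := by
      rw [Finset.card_sdiff_of_subset hsub, Finset.card_insert_of_notMem hnm,
        Finset.card_univ, Fintype.card_fin, SimpleGraph.card_neighborFinset_eq_degree]
      have h1 : G.degree i < n := by
        have := G.degree_lt_card_verts i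
        rwa [Fintype.card_fin] at this
      push_cast [Nat.cast_sub (by omega : G.degree i + 1 ≤ n)]
      rw [hd]
      ring
    have hcomp : (n:ℝ) - 1 - d
        ≤ ∑ v ∈ Finset.univ \ insert i (G.neighborFinset i), (G.degree v : ℝ) := by
      have h := Finset.card_nsmul_le_sum (Finset.univ \ insert i (G.neighborFinset i))
        (fun v => (G.degree v : ℝ)) 1 (fun v _ => by
          show (1:ℝ) ≤ (G.degree v : ℝ)
          exact_mod_cast hdeg v)
      rw [nsmul_eq_mul, mul_one] at h
      rw [← hccard]
      exact h
    rw [hsum] at hdec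
    linarith
  set q := 2 * (m:ℝ) / ((n:ℝ) - 1) with hq
  have hq' : q * ((n:ℝ) - 1) = 2*(m:ℝ) := div_mul_cancel₀ _ hn1.ne'
  clear_value B d q
  have h2B : 2 * B = q + (n:ℝ) - 2 := by
    rw [hB, hq]
    field_simp
    ring
  rcases le_or_gt d (q - 1) with hcase | hcase
  · have hlin : d + ((n:ℝ) - 1) ≤ 2 * B := by rw [h2B]; linarith
    have hmul : d * (d + ((n:ℝ) - 1)) ≤ d * (2 * B) :=
      mul_le_mul_of_nonneg_left hlin (by linarith)
    nlinarith [hnb1, hmul]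
  · have hfact : 0 ≤ (d - (q - 1)) * (((n:ℝ) - 1) - d) :=
      mul_nonneg (by linarith) (by linarith [hdlt i])
    nlinarith [hnb2, hfact, hq']

end Spectral
section Split

lemma split_mulVec {n : ℕ} (G : SimpleGraph (Fin n)) (H : Finset (Fin n))
    (hstr1 : ∀ x ∈ H, ∀ y, y ≠ x → G.Adj x y)
    (hstr2 : ∀ x ∉ H, ∀ y, G.Adj x y ↔ y ∈ H)
    (t b : ℝ)
    (e1 : ((n:ℝ) - 1) / 2 + ((H.card : ℝ) - 1 + ((n:ℝ) - H.card) * b) / 2 = t)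
    (e2 : (H.card : ℝ) * b / 2 + (H.card : ℝ) / 2 = t * b) :
    (AalphaMatrix (1/2) G).mulVec (fun i => if i ∈ H then (1:ℝ) else b)
      = t • (fun i => if i ∈ H then (1:ℝ) else b) := by
  have hcard_le : H.card ≤ n := by
    have := Finset.card_le_card (Finset.subset_univ H)
    rwa [Finset.card_univ, Fintype.card_fin] at this
  have hsumv : ∑ j, (if j ∈ H then (1:ℝ) else b) = (H.card : ℝ) + ((n:ℝ) - H.card) * b := by
    rw [Finset.sum_ite, Finset.sum_const, Finset.sum_const]
    have h1 : Finset.univ.filter (fun j => j ∈ H) = H := by ext j; simp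
    have h2 : (Finset.univ.filter (fun j : Fin n => j ∉ H)).card = n - H.card := by
      have h3 : Finset.univ.filter (fun j : Fin n => j ∉ H) = Finset.univ \ H := by ext j; simp
      rw [h3, Finset.card_sdiff_of_subset (Finset.subset_univ H), Finset.card_univ, Fintype.card_fin]
    rw [h1, h2, nsmul_eq_mul, nsmul_eq_mul, mul_one]
    rw [Nat.cast_sub hcard_le]
  funext i
  have hn1 : 1 ≤ n := i.pos
  rw [aalpha_mulVec]
  simp only [Pi.smul_apply, smul_eq_mul]
  by_cases hiH : i ∈ H
  · have hnb : G.neighborFinset i = Finset.univ.erase i := by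
      ext y
      simp only [SimpleGraph.mem_neighborFinset, Finset.mem_erase, Finset.mem_univ, and_true]
      constructor
      · intro hadj; exact (G.ne_of_adj hadj).symm
      · intro hy; exact hstr1 i hiH y hy
    have hdeg : G.degree i = n - 1 := by
      rw [← SimpleGraph.card_neighborFinset_eq_degree, hnb,
        Finset.card_erase_of_mem (Finset.mem_univ i), Finset.card_univ, Fintype.card_fin]
    have hsum_er : ∑ j ∈ Finset.univ.erase i, (if j ∈ H then (1:ℝ) else b)
        = (H.card : ℝ) + ((n:ℝ) - H.card) * b - 1 := by
      rw [Finset.sum_erase_eq_sub (Finset.mem_univ i), hsumv, if_pos hiH]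
    rw [hdeg, hnb, hsum_er, if_pos hiH]
    rw [Nat.cast_sub hn1]
    push_cast
    linarith [e1]
  · have hnb : G.neighborFinset i = H := by
      ext y
      simp only [SimpleGraph.mem_neighborFinset]
      exact hstr2 i hiH y
    have hdeg : G.degree i = H.card := by
      rw [← SimpleGraph.card_neighborFinset_eq_degree, hnb]
    have hsumH : ∑ j ∈ H, (if j ∈ H then (1:ℝ) else b) = (H.card : ℝ) := by
      rw [Finset.sum_congr rfl (fun j hj => if_pos hj), Finset.sum_const, nsmul_eq_mul, mul_one]
    rw [hdeg, hnb, hsumH, if_neg hiH]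
    linarith [e2]

lemma vsplit_pos {n : ℕ} (H : Finset (Fin n)) {b : ℝ} (hb : 0 < b) (i : Fin n) :
    0 < (if i ∈ H then (1:ℝ) else b) := by
  split_ifs
  · norm_num
  · exact hb

lemma rho_ge_split {n : ℕ} (hn : 0 < n) (G : SimpleGraph (Fin n)) (H : Finset (Fin n))
    (hstr1 : ∀ x ∈ H, ∀ y, y ≠ x → G.Adj x y)
    (hstr2 : ∀ x ∉ H, ∀ y, G.Adj x y ↔ y ∈ H)
    (t b : ℝ) (hb : 0 < b)
    (e1 : ((n:ℝ) - 1) / 2 + ((H.card : ℝ) - 1 + ((n:ℝ) - H.card) * b) / 2 = t)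
    (e2 : (H.card : ℝ) * b / 2 + (H.card : ℝ) / 2 = t * b) :
    t ≤ rhoAlpha (1/2) G := by
  have hmv := split_mulVec G H hstr1 hstr2 t b e1 e2
  have hvpos : ∀ i, 0 < (if i ∈ H then (1:ℝ) else b) := vsplit_pos H hb
  have hvne : (fun i => if i ∈ H then (1:ℝ) else b) ≠ 0 := by
    intro hcontra
    have h0 : (if (⟨0, hn⟩ : Fin n) ∈ H then (1:ℝ) else b) = 0 := congrFun hcontra _
    have := hvpos ⟨0, hn⟩
    linarith
  have heig : Module.End.HasEigenvalue
      (Matrix.toLin' (AalphaMatrix (1/2) G)) t := by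
    apply Module.End.hasEigenvalue_of_hasEigenvector
      (x := fun i => if i ∈ H then (1:ℝ) else b)
    refine ⟨?_, hvne⟩
    rw [Module.End.mem_eigenspace_iff, Matrix.toLin'_apply, hmv]
  have hrow : ∀ i, (AalphaMatrix (1/2) G).mulVec (fun i => if i ∈ H then (1:ℝ) else b) i
      ≤ t * (if i ∈ H then (1:ℝ) else b) := by
    intro i
    rw [hmv]
    simp only [Pi.smul_apply, smul_eq_mul]
    exact le_refl _
  have hbdd := bddAbove_eig hn _ (aalpha_nonneg G) _ hvpos t hrow
  exact le_maxEig _ hbdd heig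

lemma rho_le_split {n : ℕ} (hn : 0 < n) (G : SimpleGraph (Fin n)) (H : Finset (Fin n))
    (hstr1 : ∀ x ∈ H, ∀ y, y ≠ x → G.Adj x y)
    (hstr2 : ∀ x ∉ H, ∀ y, G.Adj x y ↔ y ∈ H)
    (t b : ℝ) (hb : 0 < b) (ht : 0 ≤ t)
    (e1 : ((n:ℝ) - 1) / 2 + ((H.card : ℝ) - 1 + ((n:ℝ) - H.card) * b) / 2 = t)
    (e2 : (H.card : ℝ) * b / 2 + (H.card : ℝ) / 2 = t * b) :
    rhoAlpha (1/2) G ≤ t := by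
  have hmv := split_mulVec G H hstr1 hstr2 t b e1 e2
  have hvpos : ∀ i, 0 < (if i ∈ H then (1:ℝ) else b) := vsplit_pos H hb
  have hrow : ∀ i, (AalphaMatrix (1/2) G).mulVec (fun i => if i ∈ H then (1:ℝ) else b) i
      ≤ t * (if i ∈ H then (1:ℝ) else b) := by
    intro i
    rw [hmv]
    simp only [Pi.smul_apply, smul_eq_mul]
    exact le_refl _
  exact maxEig_le hn _ (aalpha_nonneg G) _ hvpos t hrow ht

end Split

section Glue

lemma conn_deg_pos {n : ℕ} (hn : 2 ≤ n) {G : SimpleGraph (Fin n)} (hG : G.Connected)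
    (v : Fin n) : 0 < G.degree v := by
  rw [G.degree_pos_iff_exists_adj]
  have hcard : 1 < Fintype.card (Fin n) := by simp; omega
  obtain ⟨w, hw⟩ := Fintype.exists_ne_of_one_lt_card hcard v
  obtain ⟨p⟩ := hG.preconnected v w
  cases p with
  | nil => exact absurd rfl hw
  | cons h _ => exact ⟨_, h⟩

lemma hasM_univ_pm {V : Type*} [Fintype V] {G : SimpleGraph V} (h : HasM G Finset.univ) :
    ∃ M : G.Subgraph, M.IsPerfectMatching := by
  obtain ⟨p, hp⟩ := h
  have hadj : ∀ v, G.Adj v (p v) := fun v => (hp v (Finset.mem_univ v)).2.1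
  have hpp : ∀ v, p (p v) = v := fun v => (hp v (Finset.mem_univ v)).2.2
  refine ⟨⟨Set.univ, fun a b => p a = b ∧ p b = a ∧ G.Adj a b, ?_, ?_, ?_⟩, ?_,
    fun v => Set.mem_univ v⟩
  · exact fun {a b} hab => hab.2.2
  · exact fun {a b} _ => Set.mem_univ a
  · constructor
    intro a b hab
    exact ⟨hab.2.1, hab.1, hab.2.2.symm⟩
  · intro v _
    refine ⟨p v, ⟨rfl, hpp v, hadj v⟩, ?_⟩
    rintro y ⟨h1, -, -⟩
    exact h1.symm

lemma dS_univ {n : ℕ} (G : SimpleGraph (Fin n)) (v : Fin n) :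
    dS G Finset.univ v = G.degree v := by
  rw [← SimpleGraph.card_neighborFinset_eq_degree, SimpleGraph.neighborFinset_eq_filter]
  rfl

lemma E2_univ {n : ℕ} (G : SimpleGraph (Fin n)) :
    E2 G Finset.univ = 2 * G.edgeFinset.card := by
  rw [E2, Finset.sum_congr rfl (fun v _ => dS_univ G v)]
  exact G.sum_degrees_eq_twice_card_edges

end Glue
section Main8

lemma sqrt6_lb : (3:ℝ)/2 < Real.sqrt 6 := by
  nlinarith [Real.sq_sqrt (by norm_num : (6:ℝ) ≥ 0), Real.sqrt_nonneg 6]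

lemma sqrt6_lb17 : (17:ℝ) < 7 * Real.sqrt 6 := by
  nlinarith [Real.sq_sqrt (by norm_num : (6:ℝ) ≥ 0), Real.sqrt_nonneg 6]

lemma e1_8 {c : ℕ} (hc : c = 3) :
    (((8:ℕ):ℝ) - 1) / 2 + (((c:ℕ):ℝ) - 1 + (((8:ℕ):ℝ) - ((c:ℕ):ℝ)) * ((2*Real.sqrt 6 - 3)/5)) / 2
      = 3 + Real.sqrt 6 := by
  subst hc
  push_cast
  field_simp
  ring

lemma e2_8 {c : ℕ} (hc : c = 3) :
    ((c:ℕ):ℝ) * ((2*Real.sqrt 6 - 3)/5) / 2 + ((c:ℕ):ℝ) / 2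
      = (3 + Real.sqrt 6) * ((2*Real.sqrt 6 - 3)/5) := by
  subst hc
  have h6 : Real.sqrt 6 ^ 2 = 6 := Real.sq_sqrt (by norm_num)
  push_cast
  linear_combination (-2/5 : ℝ) * h6

lemma b8_pos : 0 < (2*Real.sqrt 6 - 3)/5 := by
  have := sqrt6_lb
  linarith

lemma main8 (G : SimpleGraph (Fin 8)) (hG : G.Connected)
    (h : rhoAlpha (1/2) (splitGraph 8 3) < rhoAlpha (1/2) G) :
    ∃ M : G.Subgraph, M.IsPerfectMatching := by
  by_contra hno
  have hnoM : ¬ HasM G Finset.univ := fun hM => hno (hasM_univ_pm hM)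
  have hdeg : ∀ v, 0 < G.degree v := fun v => conn_deg_pos (by norm_num) hG v
  set t : ℝ := 3 + Real.sqrt 6 with hts
  have ht0 : 0 ≤ t := by
    have := Real.sqrt_nonneg 6
    rw [hts]; linarith
  -- the split graph structure
  have hmem8 : ∀ x : Fin 8, x ∈ ({0,1,2} : Finset (Fin 8)) ↔ (x:ℕ) < 3 := by decide
  have hcard8 : ({0,1,2} : Finset (Fin 8)).card = 3 := by decide
  have hsstr1 : ∀ x ∈ ({0,1,2} : Finset (Fin 8)), ∀ y, y ≠ x → (splitGraph 8 3).Adj x y := by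
    intro x hx y hy
    show x ≠ y ∧ ((x:ℕ) < 3 ∨ (y:ℕ) < 3)
    exact ⟨Ne.symm hy, Or.inl ((hmem8 x).mp hx)⟩
  have hsstr2 : ∀ x ∉ ({0,1,2} : Finset (Fin 8)), ∀ y,
      (splitGraph 8 3).Adj x y ↔ y ∈ ({0,1,2} : Finset (Fin 8)) := by
    intro x hx y
    have hx3 : ¬ (x:ℕ) < 3 := fun hcon => hx ((hmem8 x).mpr hcon)
    constructor
    · rintro ⟨hne, hor⟩
      rcases hor with h1 | h1
      · exact absurd h1 hx3
      · exact (hmem8 y).mpr h1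
    · intro hyH
      have hy3 : (y:ℕ) < 3 := (hmem8 y).mp hyH
      refine ⟨?_, Or.inr hy3⟩
      intro heq
      rw [heq] at hx3
      omega
  have hsplit_ge : t ≤ rhoAlpha (1/2) (splitGraph 8 3) := by
    rw [hts]
    exact rho_ge_split (by norm_num) (splitGraph 8 3) {0,1,2} hsstr1 hsstr2
      (3 + Real.sqrt 6) ((2*Real.sqrt 6 - 3)/5) b8_pos (e1_8 hcard8) (e2_8 hcard8)
  have hup := rho_le_deg (by norm_num) G hdeg
  have hc1 : ((8:ℕ):ℝ) - 1 = 7 := by norm_num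
  have hc2 : (((8:ℕ):ℝ) - 2)/2 = 3 := by norm_num
  rw [hc1, hc2] at hup
  set m := G.edgeFinset.card with hms
  have hm18 : 18 ≤ m := by
    have h1 : t < (m:ℝ) / 7 + 3 :=
      lt_of_le_of_lt hsplit_ge (lt_of_lt_of_le h hup)
    have h2 : (17:ℝ) < m := by
      have := sqrt6_lb17
      rw [hts] at h1
      nlinarith
    have : (17:ℕ) < m := by exact_mod_cast h2
    omega
  have hδ1 : ∀ x ∈ (Finset.univ : Finset (Fin 8)), 1 ≤ dS G Finset.univ x := by
    intro x _
    rw [dS_univ]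
    exact hdeg x
  have hE2 : E2 G Finset.univ = 2 * m := E2_univ G
  have hcard : (Finset.univ : Finset (Fin 8)).card = 8 := by simp
  rcases eq_or_lt_of_le hm18 with heq | hgt
  · -- m = 18 : G is forced to be the split graph; its spectral radius is t
    obtain ⟨H, hHsub, hH3, hfull, hrest⟩ := C8' hcard hδ1 (by omega) hnoM
    have hstr1 : ∀ x ∈ H, ∀ y, y ≠ x → G.Adj x y := by
      intro x hx y hy
      have h1 := hfull x hx
      have h2 : y ∈ Finset.univ.filter (G.Adj x) := by
        rw [h1]
        exact Finset.mem_erase.mpr ⟨hy, Finset.mem_univ y⟩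
      exact (Finset.mem_filter.mp h2).2
    have hstr2 : ∀ x ∉ H, ∀ y, G.Adj x y ↔ y ∈ H := by
      intro x hx y
      have h1 := hrest x (Finset.mem_univ x) hx
      constructor
      · intro hadj
        rw [← h1]
        exact Finset.mem_filter.mpr ⟨Finset.mem_univ y, hadj⟩
      · intro hyH
        rw [← h1] at hyH
        exact (Finset.mem_filter.mp hyH).2
    have hGle : rhoAlpha (1/2) G ≤ t := by
      rw [hts]
      exact rho_le_split (by norm_num) G H hstr1 hstr2
        (3 + Real.sqrt 6) ((2*Real.sqrt 6 - 3)/5) b8_pos (hts ▸ ht0) (e1_8 hH3) (e2_8 hH3)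
    linarith
  · exact hnoM (C8 hcard hδ1 (by omega))

end Main8
section Main64

lemma sqrt3_lb : (1:ℝ) < Real.sqrt 3 := by
  nlinarith [Real.sq_sqrt (by norm_num : (3:ℝ) ≥ 0), Real.sqrt_nonneg 3]

lemma sqrt3_lb8 : (8:ℝ) < 5 * Real.sqrt 3 := by
  nlinarith [Real.sq_sqrt (by norm_num : (3:ℝ) ≥ 0), Real.sqrt_nonneg 3]

lemma e1_6 {c : ℕ} (hc : c = 2) :
    (((6:ℕ):ℝ) - 1) / 2 + (((c:ℕ):ℝ) - 1 + (((6:ℕ):ℝ) - ((c:ℕ):ℝ)) * ((Real.sqrt 3 - 1)/2)) / 2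
      = 2 + Real.sqrt 3 := by
  subst hc
  push_cast
  field_simp
  ring

lemma e2_6 {c : ℕ} (hc : c = 2) :
    ((c:ℕ):ℝ) * ((Real.sqrt 3 - 1)/2) / 2 + ((c:ℕ):ℝ) / 2
      = (2 + Real.sqrt 3) * ((Real.sqrt 3 - 1)/2) := by
  subst hc
  have h3 : Real.sqrt 3 ^ 2 = 3 := Real.sq_sqrt (by norm_num)
  push_cast
  linear_combination (-1/2 : ℝ) * h3

lemma b6_pos : 0 < (Real.sqrt 3 - 1)/2 := by
  have := sqrt3_lb
  linarith

lemma main6 (G : SimpleGraph (Fin 6)) (hG : G.Connected)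
    (h : rhoAlpha (1/2) (splitGraph 6 2) < rhoAlpha (1/2) G) :
    ∃ M : G.Subgraph, M.IsPerfectMatching := by
  by_contra hno
  have hnoM : ¬ HasM G Finset.univ := fun hM => hno (hasM_univ_pm hM)
  have hdeg : ∀ v, 0 < G.degree v := fun v => conn_deg_pos (by norm_num) hG v
  set t : ℝ := 2 + Real.sqrt 3 with hts
  have ht0 : 0 ≤ t := by
    have := Real.sqrt_nonneg 3
    rw [hts]; linarith
  have hmem6 : ∀ x : Fin 6, x ∈ ({0,1} : Finset (Fin 6)) ↔ (x:ℕ) < 2 := by decide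
  have hcard6 : ({0,1} : Finset (Fin 6)).card = 2 := by decide
  have hsstr1 : ∀ x ∈ ({0,1} : Finset (Fin 6)), ∀ y, y ≠ x → (splitGraph 6 2).Adj x y := by
    intro x hx y hy
    show x ≠ y ∧ ((x:ℕ) < 2 ∨ (y:ℕ) < 2)
    exact ⟨Ne.symm hy, Or.inl ((hmem6 x).mp hx)⟩
  have hsstr2 : ∀ x ∉ ({0,1} : Finset (Fin 6)), ∀ y,
      (splitGraph 6 2).Adj x y ↔ y ∈ ({0,1} : Finset (Fin 6)) := by
    intro x hx y
    have hx2 : ¬ (x:ℕ) < 2 := fun hcon => hx ((hmem6 x).mpr hcon)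
    constructor
    · rintro ⟨hne, hor⟩
      rcases hor with h1 | h1
      · exact absurd h1 hx2
      · exact (hmem6 y).mpr h1
    · intro hyH
      have hy2 : (y:ℕ) < 2 := (hmem6 y).mp hyH
      refine ⟨?_, Or.inr hy2⟩
      intro heq
      rw [heq] at hx2
      omega
  have hsplit_ge : t ≤ rhoAlpha (1/2) (splitGraph 6 2) := by
    rw [hts]
    exact rho_ge_split (by norm_num) (splitGraph 6 2) {0,1} hsstr1 hsstr2
      (2 + Real.sqrt 3) ((Real.sqrt 3 - 1)/2) b6_pos (e1_6 hcard6) (e2_6 hcard6)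
  have hup := rho_le_deg (by norm_num) G hdeg
  have hc1 : ((6:ℕ):ℝ) - 1 = 5 := by norm_num
  have hc2 : (((6:ℕ):ℝ) - 2)/2 = 2 := by norm_num
  rw [hc1, hc2] at hup
  set m := G.edgeFinset.card with hms
  have hm9 : 9 ≤ m := by
    have h1 : t < (m:ℝ) / 5 + 2 :=
      lt_of_le_of_lt hsplit_ge (lt_of_lt_of_le h hup)
    have h2 : (8:ℝ) < m := by
      have := sqrt3_lb8
      rw [hts] at h1
      nlinarith
    have : (8:ℕ) < m := by exact_mod_cast h2
    omega
  have hδ1 : ∀ x ∈ (Finset.univ : Finset (Fin 6)), 1 ≤ dS G Finset.univ x := by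
    intro x _
    rw [dS_univ]
    exact hdeg x
  have hE2 : E2 G Finset.univ = 2 * m := E2_univ G
  have hcard : (Finset.univ : Finset (Fin 6)).card = 6 := by simp
  rcases eq_or_lt_of_le hm9 with heq | hgt
  · obtain ⟨H, hHsub, hH2, hfull, hrest⟩ := B6'' hcard hδ1 (by omega) hnoM
    have hstr1 : ∀ x ∈ H, ∀ y, y ≠ x → G.Adj x y := by
      intro x hx y hy
      have h1 := hfull x hx
      have h2 : y ∈ Finset.univ.filter (G.Adj x) := by
        rw [h1]
        exact Finset.mem_erase.mpr ⟨hy, Finset.mem_univ y⟩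
      exact (Finset.mem_filter.mp h2).2
    have hstr2 : ∀ x ∉ H, ∀ y, G.Adj x y ↔ y ∈ H := by
      intro x hx y
      have h1 := hrest x (Finset.mem_univ x) hx
      constructor
      · intro hadj
        rw [← h1]
        exact Finset.mem_filter.mpr ⟨Finset.mem_univ y, hadj⟩
      · intro hyH
        rw [← h1] at hyH
        exact (Finset.mem_filter.mp hyH).2
    have hGle : rhoAlpha (1/2) G ≤ t := by
      rw [hts]
      exact rho_le_split (by norm_num) G H hstr1 hstr2
        (2 + Real.sqrt 3) ((Real.sqrt 3 - 1)/2) b6_pos (hts ▸ ht0) (e1_6 hH2) (e2_6 hH2)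
    linarith
  · exact hnoM (B6' hcard hδ1 (by omega))

lemma e1_4 {c : ℕ} (hc : c = 1) :
    (((4:ℕ):ℝ) - 1) / 2 + (((c:ℕ):ℝ) - 1 + (((4:ℕ):ℝ) - ((c:ℕ):ℝ)) * (1/3)) / 2
      = 2 := by
  subst hc
  norm_num

lemma e2_4 {c : ℕ} (hc : c = 1) :
    ((c:ℕ):ℝ) * (1/3) / 2 + ((c:ℕ):ℝ) / 2 = 2 * (1/3) := by
  subst hc
  norm_num

lemma main4 (G : SimpleGraph (Fin 4)) (hG : G.Connected)
    (h : rhoAlpha (1/2) (splitGraph 4 1) < rhoAlpha (1/2) G) :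
    ∃ M : G.Subgraph, M.IsPerfectMatching := by
  by_contra hno
  have hnoM : ¬ HasM G Finset.univ := fun hM => hno (hasM_univ_pm hM)
  have hdeg : ∀ v, 0 < G.degree v := fun v => conn_deg_pos (by norm_num) hG v
  have hmem4 : ∀ x : Fin 4, x ∈ ({0} : Finset (Fin 4)) ↔ (x:ℕ) < 1 := by decide
  have hcard4 : ({0} : Finset (Fin 4)).card = 1 := by decide
  have hsstr1 : ∀ x ∈ ({0} : Finset (Fin 4)), ∀ y, y ≠ x → (splitGraph 4 1).Adj x y := by
    intro x hx y hy
    show x ≠ y ∧ ((x:ℕ) < 1 ∨ (y:ℕ) < 1)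
    exact ⟨Ne.symm hy, Or.inl ((hmem4 x).mp hx)⟩
  have hsstr2 : ∀ x ∉ ({0} : Finset (Fin 4)), ∀ y,
      (splitGraph 4 1).Adj x y ↔ y ∈ ({0} : Finset (Fin 4)) := by
    intro x hx y
    have hx1 : ¬ (x:ℕ) < 1 := fun hcon => hx ((hmem4 x).mpr hcon)
    constructor
    · rintro ⟨hne, hor⟩
      rcases hor with h1 | h1
      · exact absurd h1 hx1
      · exact (hmem4 y).mpr h1
    · intro hyH
      have hy1 : (y:ℕ) < 1 := (hmem4 y).mp hyH
      refine ⟨?_, Or.inr hy1⟩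
      intro heq
      rw [heq] at hx1
      omega
  have hsplit_ge : (2:ℝ) ≤ rhoAlpha (1/2) (splitGraph 4 1) :=
    rho_ge_split (by norm_num) (splitGraph 4 1) {0} hsstr1 hsstr2
      2 (1/3) (by norm_num) (e1_4 hcard4) (e2_4 hcard4)
  have hup := rho_le_deg (by norm_num) G hdeg
  have hc1 : ((4:ℕ):ℝ) - 1 = 3 := by norm_num
  have hc2 : (((4:ℕ):ℝ) - 2)/2 = 1 := by norm_num
  rw [hc1, hc2] at hup
  set m := G.edgeFinset.card with hms
  have hm4 : 4 ≤ m := by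
    have h1 : (2:ℝ) < (m:ℝ) / 3 + 1 :=
      lt_of_le_of_lt hsplit_ge (lt_of_lt_of_le h hup)
    have h2 : (3:ℝ) < m := by linarith
    have : (3:ℕ) < m := by exact_mod_cast h2
    omega
  have hE2 : E2 G Finset.univ = 2 * m := E2_univ G
  have hcard : (Finset.univ : Finset (Fin 4)).card = 4 := by simp
  exact hnoM (A4 hcard (by omega))

end Main64

theorem stmt_12 (n : ℕ) (hn : n = 4 ∨ n = 6 ∨ n = 8)
    (G : SimpleGraph (Fin n)) (hG : G.Connected)
    (h : rhoAlpha (1/2) (splitGraph n ((n - 2) / 2)) < rhoAlpha (1/2) G) :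
    ∃ M : G.Subgraph, M.IsPerfectMatching := by
  rcases hn with rfl | rfl | rfl
  · exact main4 G hG h
  · exact main6 G hG h
  · exact main8 G hG h
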